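/- If u : ℝ → ℝⁿ solves u' = F₁ u with u(0) = u₀, then u(t)^{⊗i} = exp(t A_i) u₀^{⊗i}, where A_i = Σ_{ν=1}^{i} I^{⊗(ν-1)} ⊗ F₁ ⊗ I^{⊗(i-ν)}, and moreover exp(t A_i) = (exp(t F₁))^{⊗i}. -/

import Mathlib

open NormedSpace

/-- The `i`-th Kronecker power of a vector: `(u^{⊗i}) k = ∏ ν, u (k ν)`. -/
def kronPow {n : ℕ} (u : Fin n → ℝ) (i : ℕ) : (Fin i → Fin n) → ℝ :=
  fun k => ∏ ν, u (k ν)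

/-- The `i`-th Kronecker power of a matrix: `(M^{⊗i}) k l = ∏ ν, M (k ν) (l ν)`. -/
def kronMatPow {n : ℕ} (M : Matrix (Fin n) (Fin n) ℝ) (i : ℕ) :
    Matrix (Fin i → Fin n) (Fin i → Fin n) ℝ :=
  fun k l => ∏ ν, M (k ν) (l ν)

/-- The matrix `I_n^{⊗(ν-1)} ⊗ F ⊗ I_n^{⊗(i-ν)}`. -/
def slotMat {n : ℕ} {i : ℕ} (F : Matrix (Fin n) (Fin n) ℝ) (ν : Fin i) :
    Matrix (Fin i → Fin n) (Fin i → Fin n) ℝ :=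
  fun k l => F (k ν) (l ν) * ∏ μ ∈ Finset.univ.erase ν, (if k μ = l μ then (1 : ℝ) else 0)

section Aux

variable {m : Type*} [Fintype m] [DecidableEq m]

/-- Global uniqueness for the linear ODE `x' = A x`. -/
lemma linearODE_unique (A : Matrix m m ℝ) (f g : ℝ → m → ℝ)
    (hf : ∀ s, HasDerivAt f (A.mulVec (f s)) s)
    (hg : ∀ s, HasDerivAt g (A.mulVec (g s)) s) (h0 : f 0 = g 0) (t : ℝ) : f t = g t := by
  let L : (m → ℝ) →L[ℝ] (m → ℝ) := LinearMap.toContinuousLinearMap (Matrix.mulVecLin A)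
  have hlip : ∀ s : ℝ, LipschitzOnWith ‖L‖₊ (fun x : m → ℝ => A.mulVec x) Set.univ :=
    fun _ => LipschitzWith.lipschitzOnWith L.lipschitz
  have habs : (0:ℝ) ≤ |t| := abs_nonneg t
  have hna := neg_abs_le t
  have hla := le_abs_self t
  have ht : t ∈ Set.Ioo (-(|t|+1)) (|t|+1) := ⟨by linarith, by linarith⟩
  have h0mem : (0:ℝ) ∈ Set.Ioo (-(|t|+1)) (|t|+1) := ⟨by linarith, by linarith⟩
  exact ODE_solution_unique_of_mem_Ioo (v := fun _ x => A.mulVec x)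
    (s := fun _ => Set.univ) (fun s _ => hlip s) h0mem
    (fun s _ => ⟨hf s, trivial⟩) (fun s _ => ⟨hg s, trivial⟩) h0 ht

/-- The exponential flow solves the linear ODE. -/
lemma hasDerivAt_expFlow (A : Matrix m m ℝ) (c : m → ℝ) (t : ℝ) :
    HasDerivAt (fun s : ℝ => (exp (s • A)).mulVec c)
      (A.mulVec ((exp (t • A)).mulVec c)) t := by
  letI : SeminormedRing (Matrix m m ℝ) := Matrix.linftyOpSemiNormedRing
  letI : NormedRing (Matrix m m ℝ) := Matrix.linftyOpNormedRing
  letI : NormedAlgebra ℝ (Matrix m m ℝ) := Matrix.linftyOpNormedAlgebra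
  have h1 : HasDerivAt (fun s : ℝ => exp (s • A)) (A * exp (t • A)) t :=
    hasDerivAt_exp_smul_const' A t
  let L : Matrix m m ℝ →L[ℝ] (m → ℝ) := LinearMap.toContinuousLinearMap
    { toFun := fun M : Matrix m m ℝ => M.mulVec c
      map_add' := fun M N => Matrix.add_mulVec M N c
      map_smul' := fun r M => Matrix.smul_mulVec r M c }
  have h2 := (L.hasFDerivAt).comp_hasDerivAt t h1
  have hL : ∀ M : Matrix m m ℝ, L M = M.mulVec c := fun _ => rfl
  have h3 : HasDerivAt (fun s : ℝ => (exp (s • A)).mulVec c) (L (A * exp (t • A))) t := h2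
  rw [hL, ← Matrix.mulVec_mulVec] at h3
  exact h3

end Aux

/-- Key engine: a product of solutions of `v' = F₁ v` slot-by-slot equals the
exponential of the sum of the slot matrices applied to the initial product. -/
lemma prod_solution {n : ℕ} (F₁ : Matrix (Fin n) (Fin n) ℝ) {i : ℕ}
    (v : Fin i → ℝ → Fin n → ℝ)
    (hv : ∀ ν s, HasDerivAt (v ν) (F₁.mulVec (v ν s)) s) (t : ℝ) :
    (fun k => ∏ ν, v ν t (k ν)) =
      (exp (t • ∑ ν : Fin i, slotMat F₁ ν)).mulVec (fun k => ∏ ν, v ν 0 (k ν)) := by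
  set A := ∑ ν : Fin i, slotMat F₁ ν with hA
  have hw : ∀ s, HasDerivAt (fun s (k : Fin i → Fin n) => ∏ ν, v ν s (k ν))
      (A.mulVec fun k => ∏ ν, v ν s (k ν)) s := by
    intro s
    rw [hasDerivAt_pi]
    intro k
    have hd : HasDerivAt (fun s => ∏ ν, v ν s (k ν))
        (∑ ν, (∏ μ ∈ Finset.univ.erase ν, v μ s (k μ)) • F₁.mulVec (v ν s) (k ν)) s :=
      HasDerivAt.fun_finsetProd fun ν _ => (hasDerivAt_pi.mp (hv ν s)) (k ν)
    refine hd.congr_deriv (Eq.symm ?_)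
    have key : ∀ ν : Fin i,
        (∑ l : Fin i → Fin n, slotMat F₁ ν k l * ∏ μ, v μ s (l μ))
          = (∏ μ ∈ Finset.univ.erase ν, v μ s (k μ)) • F₁.mulVec (v ν s) (k ν) := by
      intro ν
      set c : Fin i → Fin n → ℝ :=
        fun μ j => (if μ = ν then F₁ (k ν) j else if k μ = j then 1 else 0) * v μ s j with hc
      have claim1 : ∀ l : Fin i → Fin n,
          slotMat F₁ ν k l * ∏ μ, v μ s (l μ) = ∏ μ, c μ (l μ) := by
        intro l
        have h1 : ∏ μ ∈ Finset.univ.erase ν, c μ (l μ)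
            = (∏ μ ∈ Finset.univ.erase ν, (if k μ = l μ then (1:ℝ) else 0)) *
              ∏ μ ∈ Finset.univ.erase ν, v μ s (l μ) := by
          rw [← Finset.prod_mul_distrib]
          exact Finset.prod_congr rfl fun μ hμ => by
            simp [hc, Finset.ne_of_mem_erase hμ]
        rw [← Finset.mul_prod_erase Finset.univ (fun μ => c μ (l μ)) (Finset.mem_univ ν),
          ← Finset.mul_prod_erase Finset.univ (fun μ => v μ s (l μ)) (Finset.mem_univ ν),
          h1, slotMat]
        simp only [hc, if_pos rfl, eq_self_iff_true, if_true]
        ring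
      rw [Finset.sum_congr rfl fun l _ => claim1 l, ← Fintype.prod_sum,
        ← Finset.mul_prod_erase Finset.univ (fun μ => ∑ j, c μ j) (Finset.mem_univ ν)]
      have h2 : (∑ j, c ν j) = F₁.mulVec (v ν s) (k ν) := by
        simp [hc, Matrix.mulVec, dotProduct]
      have h3 : ∀ μ ∈ Finset.univ.erase ν, (∑ j, c μ j) = v μ s (k μ) := by
        intro μ hμ
        simp [hc, Finset.ne_of_mem_erase hμ, Finset.sum_ite_eq, ite_mul]
      rw [h2, Finset.prod_congr rfl h3]
      rw [smul_eq_mul, mul_comm]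
    show (A.mulVec fun k => ∏ ν, v ν s (k ν)) k = _
    simp only [Matrix.mulVec, dotProduct, hA, Matrix.sum_apply, Finset.sum_mul]
    rw [Finset.sum_comm]
    exact Finset.sum_congr rfl fun ν _ => key ν
  have h0 : (fun k : Fin i → Fin n => ∏ ν, v ν 0 (k ν)) =
      (fun s : ℝ => (exp (s • A)).mulVec fun k => ∏ ν, v ν 0 (k ν)) 0 := by
    simp [Matrix.one_mulVec]
  exact linearODE_unique A _ _ hw (fun s => hasDerivAt_expFlow A _ s) h0 t

/-- If `u' = F₁ u` with `u(0) = u₀`, then `u(t)^{⊗i} = exp(t A_i) u₀^{⊗i}` with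
`A_i = Σ_{ν=1}^i I^{⊗(ν-1)} ⊗ F₁ ⊗ I^{⊗(i-ν)}`, and moreover
`exp(t A_i) = (exp(t F₁))^{⊗i}`. -/
theorem kronPow_exp_solution (n : ℕ) (F₁ : Matrix (Fin n) (Fin n) ℝ)
    (u : ℝ → Fin n → ℝ) (u₀ : Fin n → ℝ)
    (hu : ∀ t, HasDerivAt u (F₁.mulVec (u t)) t) (h0 : u 0 = u₀) (i : ℕ) (hi : 1 ≤ i)
    (t : ℝ) :
    kronPow (u t) i = (exp (t • ∑ ν : Fin i, slotMat F₁ ν)).mulVec (kronPow u₀ i) ∧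
    exp (t • ∑ ν : Fin i, slotMat F₁ ν) = kronMatPow (exp (t • F₁)) i := by
  constructor
  · have := prod_solution (i := i) F₁ (fun _ => u) (fun _ s => hu s) t
    simp only [h0] at this
    exact this
  · ext k l
    have hv : ∀ (ν : Fin i) (s : ℝ),
        HasDerivAt (fun s : ℝ => (exp (s • F₁)).mulVec (Pi.single (l ν) 1))
          (F₁.mulVec ((exp (s • F₁)).mulVec (Pi.single (l ν) 1))) s :=
      fun ν s => hasDerivAt_expFlow F₁ _ s
    have hkey := congrFun (prod_solution F₁
      (fun ν s => (exp (s • F₁)).mulVec (Pi.single (l ν) 1)) hv t) k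
    have h0v : (fun k : Fin i → Fin n =>
        ∏ ν, (exp ((0:ℝ) • F₁)).mulVec (Pi.single (l ν) 1) (k ν)) = Pi.single l 1 := by
      funext k'
      by_cases h : k' = l
      · subst h
        simp [Matrix.one_mulVec, Pi.single_apply]
      · obtain ⟨ν, hν⟩ := Function.ne_iff.mp h
        simp only [zero_smul, exp_zero, Matrix.one_mulVec]
        rw [Pi.single_apply, if_neg h]
        exact Finset.prod_eq_zero (Finset.mem_univ ν) (by simp [Pi.single_apply, hν])
    rw [h0v] at hkey
    simp only [Matrix.mulVec_single_one, Matrix.col_apply, mul_one] at hkey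
    exact hkey.symm
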